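/- Fix matrices Ā : Matrix (Fin N) (Fin N) ℝ, E : Matrix (Fin N) (Fin s) ℝ, Ā_r : Matrix (Fin s) (Fin N) ℝ, B_e : Matrix (Fin N) (Fin p) ℝ, C_e : Matrix (Fin q) (Fin N) ℝ, set A_e = Ā + E * Ā_r, and let γ > 0. Then the following are equivalent. (I) There exist symmetric positive definite Q : Matrix (Fin N) (Fin N) ℝ and R : Matrix (Fin q) (Fin q) ℝ such that the block matrix [[Q*A_e + A_eᵀ*Q, Q*B_e],[B_eᵀ*Q, -1]] is negative definite, the block matrix [[Q, C_eᵀ],[C_e, R]] is positive definite, and Matrix.trace R < γ. (II) There exist symmetric positive definite Q̂ : Matrix (Fin N) (Fin N) ℝ and R̂ : Matrix (Fin q) (Fin q) ℝ and δ̂ > 0 such that the 3×3-block matrix [[Q̂*Ā + Āᵀ*Q̂ - Ā_rᵀ*Ā_r, Q̂*B_e, Q̂*E + Ā_rᵀ],[B_eᵀ*Q̂, -δ̂•1, 0],[Eᵀ*Q̂ + Ā_r, 0, -1]] is negative definite, the block matrix [[Q̂, δ̂•C_eᵀ],[δ̂•C_e, R̂]] is positive definite, and Matrix.trace R̂ <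 δ̂ * γ. -/

import Mathlib

open Matrix

section Aux
variable {n m : Type*} [Fintype n] [Fintype m]

lemma dpT (A : Matrix m n ℝ) (x : n → ℝ) (y : m → ℝ) :
    x ⬝ᵥ (Aᵀ *ᵥ y) = (A *ᵥ x) ⬝ᵥ y := by
  rw [dotProduct_mulVec, vecMul_transpose]

lemma dpL (A : Matrix m n ℝ) (x : n → ℝ) (y : m → ℝ) :
    (A *ᵥ x) ⬝ᵥ y = x ⬝ᵥ (Aᵀ *ᵥ y) := by
  rw [dotProduct_mulVec, vecMul_transpose]

lemma dpSym {A : Matrix n n ℝ} (hA : Aᵀ = A) (x y : n → ℝ) :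
    x ⬝ᵥ (A *ᵥ y) = (A *ᵥ x) ⬝ᵥ y := by
  rw [dotProduct_mulVec, ← mulVec_transpose, hA]

lemma dp_self_nonneg (v : n → ℝ) : 0 ≤ v ⬝ᵥ v :=
  Finset.sum_nonneg fun i _ => mul_self_nonneg _

lemma dp_self_pos {v : n → ℝ} (hv : v ≠ 0) : 0 < v ⬝ᵥ v := by
  rcases (dp_self_nonneg v).lt_or_eq with h | h
  · exact h
  · exact absurd (dotProduct_self_eq_zero.mp h.symm) hv

lemma posdef_smul {M : Matrix n n ℝ} (hM : M.PosDef) {c : ℝ} (hc : 0 < c) :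
    (c • M).PosDef := by
  refine posDef_iff_dotProduct_mulVec.mpr ⟨?_, fun x hx => ?_⟩
  · unfold Matrix.IsHermitian
    rw [conjTranspose_smul, hM.1]
    simp
  · rw [smul_mulVec, dotProduct_smul]
    exact mul_pos hc (hM.dotProduct_mulVec_pos hx)

lemma quadB (A : Matrix n n ℝ) (B : Matrix n m ℝ) (C : Matrix m n ℝ) (D : Matrix m m ℝ)
    (x : n → ℝ) (y : m → ℝ) :
    Sum.elim x y ⬝ᵥ (fromBlocks A B C D *ᵥ Sum.elim x y)
      = x ⬝ᵥ (A *ᵥ x) + x ⬝ᵥ (B *ᵥ y) + y ⬝ᵥ (C *ᵥ x) + y ⬝ᵥ (D *ᵥ y) := by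
  rw [fromBlocks_mulVec]
  simp [Sum.elim_comp_inl, Sum.elim_comp_inr]
  ring

lemma mulVec_sq_bound (M : Matrix n m ℝ) :
    ∃ K : ℝ, 0 ≤ K ∧ ∀ x : m → ℝ, (M *ᵥ x) ⬝ᵥ (M *ᵥ x) ≤ K * (x ⬝ᵥ x) := by
  refine ⟨∑ i, ∑ j, M i j ^ 2, by positivity, fun x => ?_⟩
  have h1 : (M *ᵥ x) ⬝ᵥ (M *ᵥ x) = ∑ i, (∑ j, M i j * x j) ^ 2 := by
    simp [dotProduct, mulVec, pow_two]
  have h2 : x ⬝ᵥ x = ∑ j, x j ^ 2 := by simp [dotProduct, pow_two]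
  rw [h1, h2, Finset.sum_mul]
  exact Finset.sum_le_sum fun i _ => Finset.sum_mul_sq_le_sq_mul_sq _ _ _

end Aux

lemma posdef_lb {ι : Type*} [Fintype ι] [DecidableEq ι] {P : Matrix ι ι ℝ} (hP : P.PosDef) :
    ∃ c : ℝ, 0 < c ∧ ∀ x : ι → ℝ, c * (x ⬝ᵥ x) ≤ x ⬝ᵥ (P *ᵥ x) := by
  rcases isEmpty_or_nonempty ι with hn | hn
  · refine ⟨1, one_pos, fun x => ?_⟩
    simp [dotProduct]
  · have hcont : Continuous fun x : EuclideanSpace ℝ ι =>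
        (x : ι → ℝ) ⬝ᵥ (P *ᵥ (x : ι → ℝ)) := by
      simp only [dotProduct, mulVec]
      refine continuous_finset_sum _ fun i _ => ?_
      refine Continuous.mul ?_ (continuous_finset_sum _ fun j _ => ?_)
      · exact (EuclideanSpace.proj i).continuous
      · exact continuous_const.mul (EuclideanSpace.proj j).continuous
    have hsc : IsCompact (Metric.sphere (0 : EuclideanSpace ℝ ι) 1) :=
      isCompact_sphere 0 1
    have hsne : (Metric.sphere (0 : EuclideanSpace ℝ ι) 1).Nonempty :=
      NormedSpace.sphere_nonempty.mpr zero_le_one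
    obtain ⟨x0, hx0mem, hx0min⟩ := hsc.exists_isMinOn hsne hcont.continuousOn
    have hx0ne : (x0 : ι → ℝ) ≠ 0 := by
      intro h
      have h1 : ‖x0‖ = 1 := mem_sphere_zero_iff_norm.mp hx0mem
      rw [show x0 = 0 from by simpa using h] at h1
      simp at h1
    set c := (x0 : ι → ℝ) ⬝ᵥ (P *ᵥ (x0 : ι → ℝ)) with hc
    have hcpos : 0 < c := by simpa using hP.dotProduct_mulVec_pos hx0ne
    refine ⟨c, hcpos, fun x => ?_⟩
    by_cases hx : x = 0
    · subst hx; simp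
    · set v : EuclideanSpace ℝ ι := (EuclideanSpace.equiv ι ℝ).symm x with hv
      set t : ℝ := ‖v‖ with ht
      have hxe : (v : ι → ℝ) = x := rfl
      have hvne : v ≠ 0 := by
        intro h
        apply hx
        have := congrArg (fun z : EuclideanSpace ℝ ι => (z : ι → ℝ)) h
        simpa [hxe] using this
      have hxnorm : t ≠ 0 := by simpa [ht] using hvne
      have htpos : 0 < t := lt_of_le_of_ne (norm_nonneg _) (Ne.symm hxnorm)
      set y : EuclideanSpace ℝ ι := t⁻¹ • v with hy
      have hymem : y ∈ Metric.sphere (0 : EuclideanSpace ℝ ι) 1 := by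
        rw [mem_sphere_zero_iff_norm, hy, norm_smul, ← ht]
        rw [Real.norm_eq_abs, abs_of_pos (inv_pos.mpr htpos), inv_mul_cancel₀ hxnorm]
      have hmin := hx0min hymem
      have hyx : (y : ι → ℝ) = t⁻¹ • x := rfl
      have hquad : (y : ι → ℝ) ⬝ᵥ (P *ᵥ (y : ι → ℝ))
          = t⁻¹ * t⁻¹ * (x ⬝ᵥ (P *ᵥ x)) := by
        rw [hyx, smul_dotProduct, mulVec_smul, dotProduct_smul]
        simp [smul_eq_mul]; ring
      have hxx : x ⬝ᵥ x = t * t := by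
        have h1 : t ^ 2 = ∑ i, x i ^ 2 := by
          rw [ht, hv, EuclideanSpace.norm_eq, Real.sq_sqrt (by positivity)]
          simp [Real.norm_eq_abs, sq_abs]
        have h2 : x ⬝ᵥ x = ∑ i, x i ^ 2 := by simp [dotProduct, pow_two]
        rw [h2, ← h1, pow_two]
      have hmin' : c ≤ t⁻¹ * t⁻¹ * (x ⬝ᵥ (P *ᵥ x)) := by
        rw [← hquad]; exact hmin
      calc c * (x ⬝ᵥ x) = c * (t * t) := by rw [hxx]
        _ ≤ (t⁻¹ * t⁻¹ * (x ⬝ᵥ (P *ᵥ x))) * (t * t) :=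
            mul_le_mul_of_nonneg_right hmin' (by positivity)
        _ = x ⬝ᵥ (P *ᵥ x) := by field_simp

set_option maxHeartbeats 2000000 in
theorem h2_lmi_iff_transformed_bmi
    (N sd p q : ℕ)
    (Abar : Matrix (Fin N) (Fin N) ℝ) (E : Matrix (Fin N) (Fin sd) ℝ)
    (Ar : Matrix (Fin sd) (Fin N) ℝ)
    (Be : Matrix (Fin N) (Fin p) ℝ) (Ce : Matrix (Fin q) (Fin N) ℝ)
    (γ : ℝ) (hγ : 0 < γ) :
    (∃ (Q : Matrix (Fin N) (Fin N) ℝ) (R : Matrix (Fin q) (Fin q) ℝ),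
      Q.PosDef ∧ R.PosDef ∧
      (-(Matrix.fromBlocks
          (Q * (Abar + E * Ar) + (Abar + E * Ar)ᵀ * Q) (Q * Be)
          (Beᵀ * Q) (-1))).PosDef ∧
      (Matrix.fromBlocks Q Ceᵀ Ce R).PosDef ∧
      Matrix.trace R < γ) ↔
    (∃ (Qh : Matrix (Fin N) (Fin N) ℝ) (Rh : Matrix (Fin q) (Fin q) ℝ) (δ : ℝ),
      Qh.PosDef ∧ Rh.PosDef ∧ 0 < δ ∧
      (-(Matrix.fromBlocks
          (Matrix.fromBlocks
            (Qh * Abar + Abarᵀ * Qh - Arᵀ * Ar) (Qh * Be)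
            (Beᵀ * Qh) (-(δ • (1 : Matrix (Fin p) (Fin p) ℝ))))
          (Matrix.fromRows (Qh * E + Arᵀ) 0)
          (Matrix.fromCols (Eᵀ * Qh + Ar) 0)
          (-1))).PosDef ∧
      (Matrix.fromBlocks Qh (δ • Ceᵀ) (δ • Ce) Rh).PosDef ∧
      Matrix.trace Rh < δ * γ) := by
  set A : Matrix (Fin N) (Fin N) ℝ := Abar + E * Ar with hA
  constructor
  · -- (I) → (II)
    rintro ⟨Q, R, hQ, hR, h1, h2, htr⟩
    have hQs : Qᵀ = Q := by
      rw [← conjTranspose_eq_transpose_of_trivial]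
      exact hQ.1
    obtain ⟨c, hc, hcl⟩ := posdef_lb h1
    obtain ⟨K, hK, hKl⟩ := mulVec_sq_bound (Eᵀ * Q)
    set δ : ℝ := min 1 (c / (4 * K + 1)) with hδdef
    have hδpos : 0 < δ := lt_min one_pos (div_pos hc (by linarith))
    have hδK : 2 * δ * K ≤ c / 2 := by
      have h1' : δ ≤ c / (4 * K + 1) := min_le_right _ _
      have h2' : (0:ℝ) < 4 * K + 1 := by linarith
      rw [le_div_iff₀ h2'] at h1'
      nlinarith
    refine ⟨δ • Q, δ • R, δ, posdef_smul hQ hδpos, posdef_smul hR hδpos, hδpos, ?_, ?_, ?_⟩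
    · -- main bilinear LMI
      refine posDef_iff_dotProduct_mulVec.mpr ⟨?_, ?_⟩
      · show _ = _
        rw [conjTranspose_eq_transpose_of_trivial, transpose_neg, fromBlocks_transpose,
          fromBlocks_transpose, transpose_fromRows, transpose_fromCols]
        simp only [transpose_add, transpose_sub, transpose_mul, transpose_smul,
          transpose_one, transpose_zero, transpose_transpose, transpose_neg, hQs]
        congr 2
        abel
      · intro V hV
        set x : Fin N → ℝ := V ∘ (Sum.inl ∘ Sum.inl) with hx
        set u : Fin p → ℝ := V ∘ (Sum.inl ∘ Sum.inr) with hu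
        set w : Fin sd → ℝ := V ∘ Sum.inr with hw
        have hVelim : V = Sum.elim (Sum.elim x u) w := by
          funext i
          rcases i with (i | i) | i <;> rfl
        have hwE : w ⬝ᵥ (Eᵀ *ᵥ (Q *ᵥ x)) = x ⬝ᵥ (Q *ᵥ (E *ᵥ w)) := by
          rw [dotProduct_comm, dpL, transpose_transpose, dpL, hQs]
        have hAr : x ⬝ᵥ (Arᵀ *ᵥ (Eᵀ *ᵥ (Q *ᵥ x))) = x ⬝ᵥ (Q *ᵥ (E *ᵥ (Ar *ᵥ x))) := by
          rw [dpT, dpT, dotProduct_comm, dpL, hQs]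
        have hid : V ⬝ᵥ ((Matrix.fromBlocks
            (Matrix.fromBlocks
              ((δ • Q) * Abar + Abarᵀ * (δ • Q) - Arᵀ * Ar) ((δ • Q) * Be)
              (Beᵀ * (δ • Q)) (-(δ • (1 : Matrix (Fin p) (Fin p) ℝ))))
            (Matrix.fromRows ((δ • Q) * E + Arᵀ) 0)
            (Matrix.fromCols (Eᵀ * (δ • Q) + Ar) 0)
            (-1)) *ᵥ V)
            = δ * ((Sum.elim x u) ⬝ᵥ ((Matrix.fromBlocks
                (Q * A + Aᵀ * Q) (Q * Be) (Beᵀ * Q) (-1)) *ᵥ (Sum.elim x u)))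
              - (w - Ar *ᵥ x) ⬝ᵥ (w - Ar *ᵥ x)
              + 2 * δ * (((Eᵀ * Q) *ᵥ x) ⬝ᵥ (w - Ar *ᵥ x)) := by
          rw [hVelim]
          simp only [quadB, fromRows_mulVec, fromCols_mulVec_sumElim,
            sumElim_dotProduct_sumElim, zero_mulVec, dotProduct_zero,
            Matrix.add_mulVec, Matrix.sub_mulVec, Matrix.neg_mulVec,
            smul_mulVec, one_mulVec, dotProduct_add, dotProduct_sub,
            dotProduct_neg, dotProduct_smul, smul_eq_mul, hA, dpL,
            ← mulVec_mulVec, hQs, transpose_mul, transpose_transpose, transpose_add,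
            mulVec_add, mulVec_sub, smul_mul_assoc, mul_smul_comm, smul_add, smul_sub,
            sub_dotProduct, smul_dotProduct, mulVec_smul]
          simp only [hwE, hAr]
          ring
        set z : Fin sd → ℝ := w - Ar *ᵥ x with hz
        set t : Fin sd → ℝ := (Eᵀ * Q) *ᵥ x with ht
        have hg : (Sum.elim x u) ⬝ᵥ ((Matrix.fromBlocks
            (Q * A + Aᵀ * Q) (Q * Be) (Beᵀ * Q) (-1)) *ᵥ (Sum.elim x u))
            ≤ -(c * (x ⬝ᵥ x + u ⬝ᵥ u)) := by
          have h0 := hcl (Sum.elim x u)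
          rw [neg_mulVec, dotProduct_neg, sumElim_dotProduct_sumElim] at h0
          linarith
        have hcs : 2 * δ * (t ⬝ᵥ z) ≤ (1/2) * (z ⬝ᵥ z) + 2 * δ^2 * (t ⬝ᵥ t) := by
          have h0 : 0 ≤ (z - (2*δ) • t) ⬝ᵥ (z - (2*δ) • t) := dp_self_nonneg _
          have hexp : (z - (2*δ) • t) ⬝ᵥ (z - (2*δ) • t)
              = z ⬝ᵥ z - 4*δ*(t ⬝ᵥ z) + 4*δ^2*(t ⬝ᵥ t) := by
            simp only [sub_dotProduct, dotProduct_sub, smul_dotProduct, dotProduct_smul,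
              smul_eq_mul, dotProduct_comm z t]
            ring
          rw [hexp] at h0
          linarith
        have htt : t ⬝ᵥ t ≤ K * (x ⬝ᵥ x) := hKl x
        have hfle : V ⬝ᵥ ((Matrix.fromBlocks
            (Matrix.fromBlocks
              ((δ • Q) * Abar + Abarᵀ * (δ • Q) - Arᵀ * Ar) ((δ • Q) * Be)
              (Beᵀ * (δ • Q)) (-(δ • (1 : Matrix (Fin p) (Fin p) ℝ))))
            (Matrix.fromRows ((δ • Q) * E + Arᵀ) 0)
            (Matrix.fromCols (Eᵀ * (δ • Q) + Ar) 0)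
            (-1)) *ᵥ V)
            ≤ -(δ * c / 2) * (x ⬝ᵥ x) - δ * c * (u ⬝ᵥ u) - (1/2) * (z ⬝ᵥ z) := by
          rw [hid]
          have hgd : δ * ((Sum.elim x u) ⬝ᵥ ((Matrix.fromBlocks
              (Q * A + Aᵀ * Q) (Q * Be) (Beᵀ * Q) (-1)) *ᵥ (Sum.elim x u)))
              ≤ δ * (-(c * (x ⬝ᵥ x + u ⬝ᵥ u))) := mul_le_mul_of_nonneg_left hg hδpos.le
          have hxx := dp_self_nonneg x
          nlinarith [mul_le_mul_of_nonneg_left htt (by positivity : (0:ℝ) ≤ 2 * δ^2),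
            mul_le_mul_of_nonneg_right hδK (mul_nonneg hδpos.le hxx)]
        have hfneg : V ⬝ᵥ ((Matrix.fromBlocks
            (Matrix.fromBlocks
              ((δ • Q) * Abar + Abarᵀ * (δ • Q) - Arᵀ * Ar) ((δ • Q) * Be)
              (Beᵀ * (δ • Q)) (-(δ • (1 : Matrix (Fin p) (Fin p) ℝ))))
            (Matrix.fromRows ((δ • Q) * E + Arᵀ) 0)
            (Matrix.fromCols (Eᵀ * (δ • Q) + Ar) 0)
            (-1)) *ᵥ V) < 0 := by
          have hzz := dp_self_nonneg z
          have huu := dp_self_nonneg u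
          have hxx := dp_self_nonneg x
          have hδc : 0 < δ * c := mul_pos hδpos hc
          by_cases hx0 : x = 0
          · by_cases hu0 : u = 0
            · have hw0 : w ≠ 0 := by
                intro hw0
                apply hV
                rw [hVelim, hx0, hu0, hw0]
                funext i
                rcases i with (i | i) | i <;> rfl
              have hzne : z ≠ 0 := by
                rw [hz, hx0]
                simpa using hw0
              have := dp_self_pos hzne
              nlinarith
            · have := dp_self_pos hu0
              nlinarith
          · have := dp_self_pos hx0
            nlinarith
        rw [star_trivial, neg_mulVec, dotProduct_neg]
        linarith
    · -- second LMI
      rw [show (Matrix.fromBlocks (δ • Q) (δ • Ceᵀ) (δ • Ce) (δ • R))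
          = δ • (Matrix.fromBlocks Q Ceᵀ Ce R) from (fromBlocks_smul δ Q Ceᵀ Ce R).symm]
      exact posdef_smul h2 hδpos
    · -- trace
      rw [trace_smul]
      simpa [smul_eq_mul] using mul_lt_mul_of_pos_left htr hδpos
  · -- (II) → (I)
    rintro ⟨Qh, Rh, δ, hQh, hRh, hδ, h3, hP2, htr⟩
    have hδ' : δ⁻¹ ≠ 0 := ne_of_gt (inv_pos.mpr hδ)
    have hQs : Qhᵀ = Qh := by
      rw [← conjTranspose_eq_transpose_of_trivial]
      exact hQh.1
    refine ⟨δ⁻¹ • Qh, δ⁻¹ • Rh, posdef_smul hQh (inv_pos.mpr hδ),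
      posdef_smul hRh (inv_pos.mpr hδ), ?_, ?_, ?_⟩
    · -- first LMI
      have hM2 : (-(Matrix.fromBlocks (Qh * A + Aᵀ * Qh) (Qh * Be)
          (Beᵀ * Qh) (-(δ • (1 : Matrix (Fin p) (Fin p) ℝ))))).PosDef := by
        refine posDef_iff_dotProduct_mulVec.mpr ⟨?_, ?_⟩
        · show _ = _
          rw [conjTranspose_eq_transpose_of_trivial, transpose_neg, fromBlocks_transpose]
          simp [transpose_add, transpose_mul, transpose_smul, hQs, Matrix.fromBlocks_neg]
          abel
        · intro v hv
          set x : Fin N → ℝ := v ∘ Sum.inl with hx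
          set u : Fin p → ℝ := v ∘ Sum.inr with hu
          have hvelim : v = Sum.elim x u := (Sum.elim_comp_inl_inr v).symm
          set W : ((Fin N ⊕ Fin p) ⊕ Fin sd) → ℝ := Sum.elim (Sum.elim x u) (Ar *ᵥ x) with hW
          have hWne : W ≠ 0 := by
            intro h
            apply hv
            rw [hvelim]
            have h1 : Sum.elim x u = (0 : (Fin N ⊕ Fin p) → ℝ) := by
              funext i
              have := congrFun h (Sum.inl i)
              simpa [hW] using this
            exact h1
          have key := h3.dotProduct_mulVec_pos hWne
          have hmain : v ⬝ᵥ ((Matrix.fromBlocks (Qh * A + Aᵀ * Qh) (Qh * Be)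
              (Beᵀ * Qh) (-(δ • (1 : Matrix (Fin p) (Fin p) ℝ)))) *ᵥ v)
              = W ⬝ᵥ ((Matrix.fromBlocks
                (Matrix.fromBlocks (Qh * Abar + Abarᵀ * Qh - Arᵀ * Ar) (Qh * Be)
                  (Beᵀ * Qh) (-(δ • (1 : Matrix (Fin p) (Fin p) ℝ))))
                (Matrix.fromRows (Qh * E + Arᵀ) 0)
                (Matrix.fromCols (Eᵀ * Qh + Ar) 0)
                (-1)) *ᵥ W) := by
            rw [hvelim, hW]
            simp only [quadB, fromRows_mulVec, fromCols_mulVec_sumElim,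
              sumElim_dotProduct_sumElim, zero_mulVec, dotProduct_zero,
              Matrix.add_mulVec, Matrix.sub_mulVec, Matrix.neg_mulVec,
              smul_mulVec, one_mulVec, dotProduct_add, dotProduct_sub,
              dotProduct_neg, dotProduct_smul, smul_eq_mul, hA, dpL,
              ← mulVec_mulVec, hQs, transpose_mul, transpose_transpose, transpose_add,
              mulVec_add]
            ring
          rw [star_trivial] at key ⊢
          rw [hvelim, neg_mulVec, dotProduct_neg, ← hvelim, hmain]
          rw [neg_mulVec, dotProduct_neg] at key
          exact key
      have heq : (Matrix.fromBlocks ((δ⁻¹ • Qh) * A + Aᵀ * (δ⁻¹ • Qh)) ((δ⁻¹ • Qh) * Be)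
          (Beᵀ * (δ⁻¹ • Qh)) (-1 : Matrix (Fin p) (Fin p) ℝ))
          = δ⁻¹ • (Matrix.fromBlocks (Qh * A + Aᵀ * Qh) (Qh * Be)
            (Beᵀ * Qh) (-(δ • (1 : Matrix (Fin p) (Fin p) ℝ)))) := by
        simp [fromBlocks_smul, smul_add, smul_mul_assoc, mul_smul_comm, smul_neg,
          smul_smul, inv_mul_cancel₀ (ne_of_gt hδ)]
      rw [heq, ← smul_neg]
      exact posdef_smul hM2 (inv_pos.mpr hδ)
    · -- second LMI
      have heq : (Matrix.fromBlocks (δ⁻¹ • Qh) Ceᵀ Ce (δ⁻¹ • Rh))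
          = δ⁻¹ • (Matrix.fromBlocks Qh (δ • Ceᵀ) (δ • Ce) Rh) := by
        simp [fromBlocks_smul, smul_smul, inv_mul_cancel₀ (ne_of_gt hδ)]
      rw [heq]
      exact posdef_smul hP2 (inv_pos.mpr hδ)
    · -- trace
      rw [trace_smul]
      have := mul_lt_mul_of_pos_left htr (inv_pos.mpr hδ)
      rw [← mul_assoc, inv_mul_cancel₀ (ne_of_gt hδ), one_mul] at this
      simpa [smul_eq_mul] using this
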